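/- (Corollary 3.2) Let n ≥ 3 and let S = {x_1, ..., x_n} be a set of n distinct positive integers such that gcd(x_i, x_j) = x_1 for all distinct i, j ≤ n−1 and lcm(x_1, x_2, ..., x_{n−1}) divides x_n. Then the LCM matrix [S] is invertible. -/
import Mathlib

set_option maxHeartbeats 1000000


/-- Corollary 3.2: Let `n ≥ 3` and let `S = {x_1, …, x_n}` be a set of `n`
distinct positive integers with `gcd(x_i, x_j) = x_1` for all distinct `i, j ≤ n−1` and
`lcm(x_1, …, x_{n−1}) ∣ x_n`. Then the LCM matrix `[S]` is invertible.
(Here `Fin n` is 0-indexed: `x ⟨0,_⟩` is `x_1` and `x ⟨n-1,_⟩` is `x_n`.) -/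
theorem lcmMatrix_x1set_plus_top_isUnit
    {n : ℕ} (hn : 3 ≤ n) (x : Fin n → ℕ) (hinj : Function.Injective x)
    (hpos : ∀ i, 0 < x i)
    (hgcd : ∀ i j : Fin n, i ≠ j → (i : ℕ) < n - 1 → (j : ℕ) < n - 1 →
      Nat.gcd (x i) (x j) = x ⟨0, by omega⟩)
    (hlcm : (Finset.univ.filter (fun i : Fin n => (i : ℕ) < n - 1)).lcm x ∣
      x ⟨n - 1, by omega⟩) :
    IsUnit (Matrix.of fun i j : Fin n => (Nat.lcm (x i) (x j) : ℚ)) := by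
  rw [Matrix.isUnit_iff_isUnit_det, isUnit_iff_ne_zero]
  intro hdet
  obtain ⟨v, hv0, hv⟩ := Matrix.exists_mulVec_eq_zero_iff.mpr hdet
  set z : Fin n := ⟨0, by omega⟩ with hz
  set L : Fin n := ⟨n - 1, by omega⟩ with hL
  set P : Finset (Fin n) := Finset.univ.filter (fun i : Fin n => (i : ℕ) < n - 1) with hP
  have hzP : z ∈ P := by simp [hP, hz]; omega
  have hLP : L ∉ P := by simp [hP, hL]
  have hmemP : ∀ j : Fin n, j ∈ P ↔ (j : ℕ) < n - 1 := by intro j; simp [hP]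
  -- split sums
  have hsplit : ∀ f : Fin n → ℚ, (∑ j, f j) = (∑ j ∈ P, f j) + f L := by
    intro f
    have h1 : Finset.univ.filter (fun j : Fin n => ¬ ((j : ℕ) < n - 1)) = {L} := by
      ext j
      simp only [Finset.mem_filter, Finset.mem_univ, true_and, Finset.mem_singleton,
        Fin.ext_iff, hL]
      have := j.isLt; omega
    rw [← Finset.sum_filter_add_sum_filter_not Finset.univ
      (fun j : Fin n => (j : ℕ) < n - 1) f, h1, Finset.sum_singleton]
  -- basic divisibility facts
  have ha_dvd : ∀ i ∈ P, x z ∣ x i := by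
    intro i hi
    rcases eq_or_ne i z with rfl | hne
    · exact dvd_rfl
    · have h := hgcd z i (Ne.symm hne) (by simp [hz]; omega) ((hmemP i).1 hi)
      calc x z = Nat.gcd (x z) (x i) := h.symm
        _ ∣ x i := Nat.gcd_dvd_right _ _
  have hdvdm : ∀ i ∈ P, x i ∣ x L := fun i hi => dvd_trans (Finset.dvd_lcm hi) hlcm
  have hxpos : ∀ i, (0 : ℚ) < (x i : ℚ) := fun i => by exact_mod_cast hpos i
  have hxz0 : (x z : ℚ) ≠ 0 := ne_of_gt (hxpos z)
  have hxL0 : (x L : ℚ) ≠ 0 := ne_of_gt (hxpos L)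
  -- lcm values
  have hlcm_zj : ∀ j ∈ P, Nat.lcm (x z) (x j) = x j := by
    intro j hj
    rcases eq_or_ne j z with rfl | hne
    · exact Nat.lcm_self _
    · have hg := hgcd z j (Ne.symm hne) (by simp [hz]; omega) ((hmemP j).1 hj)
      have := Nat.gcd_mul_lcm (x z) (x j)
      rw [hg] at this
      exact Nat.eq_of_mul_eq_mul_left (hpos z) this
  have hlcm_iL : ∀ i ∈ P, Nat.lcm (x i) (x L) = x L := by
    intro i hi
    exact Nat.dvd_antisymm (Nat.lcm_dvd (hdvdm i hi) dvd_rfl) (Nat.dvd_lcm_right _ _)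
  have hlcm_LL : Nat.lcm (x L) (x L) = x L := Nat.lcm_self _
  have hlcm_Lj : ∀ j ∈ P, Nat.lcm (x L) (x j) = x L := by
    intro j hj; rw [Nat.lcm_comm]; exact hlcm_iL j hj
  have hlcmQ : ∀ i ∈ P, ∀ j ∈ P, i ≠ j →
      (Nat.lcm (x i) (x j) : ℚ) = (x i : ℚ) * (x j : ℚ) / (x z : ℚ) := by
    intro i hi j hj hij
    have hg := hgcd i j hij ((hmemP i).1 hi) ((hmemP j).1 hj)
    have h := Nat.gcd_mul_lcm (x i) (x j)
    rw [hg] at h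
    have : (x z : ℚ) * (Nat.lcm (x i) (x j) : ℚ) = (x i : ℚ) * (x j : ℚ) := by
      exact_mod_cast congrArg (Nat.cast : ℕ → ℚ) h
    field_simp
    linarith [this]
  -- the row equations
  have hrow : ∀ i : Fin n, (∑ j, (Nat.lcm (x i) (x j) : ℚ) * v j) = 0 := by
    intro i
    have := congrFun hv i
    simpa [Matrix.mulVec, dotProduct] using this
  -- Row z : ∑_{j∈P} x j * v j + x L * v L = 0
  have eq0 : (∑ j ∈ P, (x j : ℚ) * v j) + (x L : ℚ) * v L = 0 := by
    have h := hrow z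
    rw [hsplit] at h
    rw [hlcm_iL z hzP] at h
    rw [Finset.sum_congr rfl (fun j hj => by rw [hlcm_zj j hj])] at h
    exact h
  -- Rows i ∈ P, i ≠ z
  have eqI : ∀ i ∈ P, i ≠ z → (x i : ℚ) * v i = -((x L : ℚ) * v L) := by
    intro i hi hiz
    have h := hrow i
    rw [hsplit, hlcm_iL i hi] at h
    -- split off j = i from the P-sum
    rw [← Finset.add_sum_erase P _ hi, Nat.lcm_self] at h
    rw [Finset.sum_congr rfl (fun j hj => by
      rw [hlcmQ i hi j (Finset.mem_of_mem_erase hj)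
        (Ne.symm (Finset.ne_of_mem_erase hj))])] at h
    have hS : (∑ j ∈ P.erase i, (x j : ℚ) * v j)
        = -((x L : ℚ) * v L) - (x i : ℚ) * v i := by
      have h2 : (x i : ℚ) * v i + ∑ j ∈ P.erase i, (x j : ℚ) * v j
          = ∑ j ∈ P, (x j : ℚ) * v j :=
        Finset.add_sum_erase P (fun j => (x j : ℚ) * v j) hi
      linarith [eq0]
    have hsum : (∑ j ∈ P.erase i, (x i : ℚ) * (x j : ℚ) / (x z : ℚ) * v j)
        = (x i : ℚ) / (x z : ℚ) * (∑ j ∈ P.erase i, (x j : ℚ) * v j) := by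
      rw [Finset.mul_sum]
      exact Finset.sum_congr rfl (fun j hj => by ring)
    rw [hsum, hS] at h
    -- h : x i * v i + (x i / x z) * (-(x L * v L) - x i * v i) + x L * v L = 0
    have hne : (x i : ℚ) ≠ (x z : ℚ) := by
      exact_mod_cast fun hc => hiz (hinj (Nat.cast_injective hc))
    have key : ((x z : ℚ) - (x i : ℚ)) * ((x L : ℚ) * v L + (x i : ℚ) * v i) = 0 := by
      field_simp at h
      ring_nf at h ⊢
      linarith [h]
    rcases mul_eq_zero.mp key with h1 | h2
    · exact absurd (by linarith : (x i : ℚ) = (x z : ℚ)) hne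
    · linarith
  -- Row L : ∑_{j∈P} v j + v L = 0
  have eqL : (∑ j ∈ P, v j) + v L = 0 := by
    have h := hrow L
    rw [hsplit, hlcm_LL] at h
    rw [Finset.sum_congr rfl (fun j hj => by rw [hlcm_Lj j hj])] at h
    have : (x L : ℚ) * ((∑ j ∈ P, v j) + v L) = 0 := by
      rw [mul_add, Finset.mul_sum]; exact h
    exact (mul_eq_zero.mp this).resolve_left hxL0
  -- cardinality
  have hcardP : P.card = n - 1 := by
    have huniv : (Finset.univ : Finset (Fin n)) = insert L P := by
      ext j
      simp only [Finset.mem_univ, Finset.mem_insert, hmemP, Fin.ext_iff, hL, true_iff]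
      have := j.isLt; omega
    have h2 : (Finset.univ : Finset (Fin n)).card = P.card + 1 := by
      rw [huniv, Finset.card_insert_of_notMem hLP]
    rw [Finset.card_univ, Fintype.card_fin] at h2
    omega
  have hcardE : (P.erase z).card = n - 2 := by
    rw [Finset.card_erase_of_mem hzP, hcardP]; omega
  -- v z in terms of v L
  have hSz : (∑ j ∈ P, (x j : ℚ) * v j)
      = (x z : ℚ) * v z + (∑ j ∈ P.erase z, (x j : ℚ) * v j) :=
    (Finset.add_sum_erase P _ hzP).symm
  have hsumE : (∑ j ∈ P.erase z, (x j : ℚ) * v j)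
      = ((n : ℚ) - 2) * (-((x L : ℚ) * v L)) := by
    rw [Finset.sum_congr rfl (fun j hj =>
      eqI j (Finset.mem_of_mem_erase hj) (Finset.ne_of_mem_erase hj))]
    rw [Finset.sum_const, hcardE, nsmul_eq_mul]
    congr 1
    have : ((n : ℚ) - 2) = ((n - 2 : ℕ) : ℚ) := by
      have : (2 : ℕ) ≤ n := by omega
      push_cast [Nat.cast_sub this]; ring
    rw [this]
  have eqz : (x z : ℚ) * v z = ((n : ℚ) - 3) * ((x L : ℚ) * v L) := by
    have := eq0
    rw [hSz, hsumE] at this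
    ring_nf at this ⊢
    linarith
  -- the sum of reciprocals
  set Sig : ℚ := ∑ j ∈ P.erase z, 1 / (x j : ℚ) with hSig
  have hTE : (∑ j ∈ P.erase z, v j) = -((x L : ℚ) * v L) * Sig := by
    rw [hSig, Finset.mul_sum]
    refine Finset.sum_congr rfl (fun j hj => ?_)
    have h := eqI j (Finset.mem_of_mem_erase hj) (Finset.ne_of_mem_erase hj)
    have hj0 : (x j : ℚ) ≠ 0 := ne_of_gt (hxpos j)
    field_simp
    linarith [h]
  have eqT : v z + (-((x L : ℚ) * v L) * Sig) + v L = 0 := by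
    have := eqL
    rw [← Finset.add_sum_erase P v hzP, hTE] at this
    linarith
  -- final equation:  v L * B = 0
  have final : v L * (((n : ℚ) - 3) * (x L : ℚ) / (x z : ℚ)
      - (x L : ℚ) * Sig + 1) = 0 := by
    have h1 : v z = ((n : ℚ) - 3) * ((x L : ℚ) * v L) / (x z : ℚ) := by
      field_simp at eqz ⊢
      linarith [eqz]
    rw [h1] at eqT
    field_simp at eqT ⊢
    ring_nf at eqT ⊢
    linarith [eqT]
  -- bounds on x j for j ∈ P.erase z
  have hge2 : ∀ j ∈ P.erase z, 2 * (x z : ℚ) ≤ (x j : ℚ) := by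
    intro j hj
    have hdvd := ha_dvd j (Finset.mem_of_mem_erase hj)
    obtain ⟨t, ht⟩ := hdvd
    have hne : x j ≠ x z := fun hc => (Finset.ne_of_mem_erase hj) (hinj hc)
    have ht2 : 2 ≤ t := by
      rcases Nat.lt_or_ge t 2 with h | h
      · interval_cases t
        · simp [ht] at hne ⊢; have := hpos j; omega
        · simp [ht] at hne
      · exact h
    have : 2 * x z ≤ x j := by rw [ht]; calc 2 * x z = x z * 2 := by ring
                                                _ ≤ x z * t := Nat.mul_le_mul_left _ ht2
    exact_mod_cast this
  have hB : ((n : ℚ) - 3) * (x L : ℚ) / (x z : ℚ) - (x L : ℚ) * Sig + 1 ≠ 0 := by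
    rcases eq_or_lt_of_le hn with h3 | h4
    · -- n = 3 : one element in P.erase z, x L ≥ 2 x j
      have hn3 : n = 3 := h3.symm
      have hge2m : ∀ j ∈ P.erase z, 2 / (x L : ℚ) ≤ 1 / (x j : ℚ) := by
        intro j hj
        have hjP := Finset.mem_of_mem_erase hj
        have hdvd := hdvdm j hjP
        obtain ⟨t, ht⟩ := hdvd
        have hne' : x j ≠ x L := by
          intro hc
          have : j = L := hinj hc
          exact hLP (this ▸ hjP)
        have ht2 : 2 ≤ t := by
          rcases Nat.lt_or_ge t 2 with h | h
          · interval_cases t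
            · simp [ht] at hne' ⊢; have := hpos L; omega
            · simp [ht] at hne'
          · exact h
        have hle : 2 * x j ≤ x L := by
          rw [ht]; calc 2 * x j = x j * 2 := by ring
            _ ≤ x j * t := Nat.mul_le_mul_left _ ht2
        have hleQ : 2 * (x j : ℚ) ≤ (x L : ℚ) := by exact_mod_cast hle
        rw [div_le_div_iff₀ (hxpos L) (hxpos j)]
        linarith
      have hSigge : 2 / (x L : ℚ) ≤ Sig := by
        have := Finset.card_nsmul_le_sum (P.erase z) (fun j => 1 / (x j : ℚ))
          (2 / (x L : ℚ)) hge2m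
        rw [hcardE] at this
        have hone : n - 2 = 1 := by omega
        rw [hone, one_smul] at this
        exact this
      have : (x L : ℚ) * Sig ≥ 2 := by
        have h2 : (x L : ℚ) * (2 / (x L : ℚ)) = 2 := by field_simp
        calc (2 : ℚ) = (x L : ℚ) * (2 / (x L : ℚ)) := h2.symm
          _ ≤ (x L : ℚ) * Sig := by
            apply mul_le_mul_of_nonneg_left hSigge (le_of_lt (hxpos L))
      have hnQ3 : (n : ℚ) = 3 := by rw [hn3]; norm_num
      intro hc
      rw [hnQ3] at hc
      norm_num at hc
      linarith
    · -- n ≥ 4 : Sig ≤ (n-2)/(2 x z), and (n-3) ≥ (n-2)/2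
      have hSigle : Sig ≤ ((n : ℚ) - 2) * (1 / (2 * (x z : ℚ))) := by
        have := Finset.sum_le_card_nsmul (P.erase z) (fun j => 1 / (x j : ℚ))
          (1 / (2 * (x z : ℚ))) (fun j hj => by
            rw [div_le_div_iff₀ (hxpos j) (by positivity)]
            linarith [hge2 j hj])
        rw [hcardE, nsmul_eq_mul] at this
        have hcast : ((n - 2 : ℕ) : ℚ) = (n : ℚ) - 2 := by
          have : (2 : ℕ) ≤ n := by omega
          push_cast [Nat.cast_sub this]; ring
        rw [hcast] at this
        exact this
      have hnQ : (4 : ℚ) ≤ (n : ℚ) := by exact_mod_cast h4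
      have hkey : (x L : ℚ) * Sig ≤ ((n : ℚ) - 3) * (x L : ℚ) / (x z : ℚ) := by
        have h1 : (x L : ℚ) * Sig ≤ (x L : ℚ) * (((n : ℚ) - 2) * (1 / (2 * (x z : ℚ)))) :=
          mul_le_mul_of_nonneg_left hSigle (le_of_lt (hxpos L))
        have h2 : (x L : ℚ) * (((n : ℚ) - 2) * (1 / (2 * (x z : ℚ))))
            ≤ ((n : ℚ) - 3) * (x L : ℚ) / (x z : ℚ) := by
          have heq : (x L : ℚ) * (((n : ℚ) - 2) * (1 / (2 * (x z : ℚ))))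
              = (x L : ℚ) * ((n : ℚ) - 2) / (2 * (x z : ℚ)) := by ring
          rw [heq, div_le_div_iff₀ (by positivity) (hxpos z)]
          nlinarith [mul_nonneg (mul_nonneg
            (by linarith : (0 : ℚ) ≤ (n : ℚ) - 4) (le_of_lt (hxpos L)))
            (le_of_lt (hxpos z))]
        linarith
      intro hc
      linarith
  -- conclude v L = 0, then v = 0
  have hvL : v L = 0 := by
    rcases mul_eq_zero.mp final with h | h
    · exact h
    · exact absurd h hB
  have hvz : v z = 0 := by
    have h0 : (x z : ℚ) * v z = 0 := by rw [eqz, hvL]; ring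
    exact (mul_eq_zero.mp h0).resolve_left hxz0
  have hvP : ∀ i ∈ P, v i = 0 := by
    intro i hi
    rcases eq_or_ne i z with rfl | hne
    · exact hvz
    · have h0 : (x i : ℚ) * v i = 0 := by rw [eqI i hi hne, hvL]; ring
      exact (mul_eq_zero.mp h0).resolve_left (ne_of_gt (hxpos i))
  apply hv0
  funext i
  rcases Nat.lt_or_ge (i : ℕ) (n - 1) with h | h
  · exact hvP i ((hmemP i).2 h)
  · have : i = L := by
      apply Fin.ext
      have := i.isLt
      simp [hL]; omega
    rw [this]
    exact hvL
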